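/- For all integers m ≥ 3 and 2 ≤ n ≤ m-2, ∑_{k=1}^{m-n+1} [ m C(n+k-2, k-1) ∏_{j=k}^{n+k-2}(m-j) - C(n+k-1, k-1) ∏_{j=k}^{n+k-1}(m+1-j) ] + ∑_{k=1}^{m-n-1} C(n+k-1, k-1) ∏_{j=k}^{n+k-1}(m-1-j) = 0. -/

import Mathlib

open Finset

-- convolution of binomial coefficients along the upper index
lemma conv_choose (a : ℕ) : ∀ b s : ℕ,
    ∑ i ∈ range (s+1), (i.choose a) * ((s - i).choose b) = (s+1).choose (a+b+1) := by
  intro b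
  induction b with
  | zero =>
    intro s
    simp only [Nat.choose_zero_right, mul_one]
    rcases le_or_gt a s with h | h
    · rw [← Nat.sum_Icc_choose]
      apply (Finset.sum_subset ?_ ?_).symm
      · intro x hx; simp only [mem_Icc] at hx; simp only [mem_range]; omega
      · intro x hx hx'; simp only [mem_range] at hx; simp only [mem_Icc] at hx'
        exact Nat.choose_eq_zero_of_lt (by omega)
    · rw [Nat.choose_eq_zero_of_lt (by omega)]
      apply Finset.sum_eq_zero
      intro x hx; simp only [mem_range] at hx
      exact Nat.choose_eq_zero_of_lt (by omega)
  | succ b ih =>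
    intro s
    induction s with
    | zero =>
      simp [Nat.choose_eq_zero_of_lt (by omega : (1:ℕ) < a+(b+1)+1)]
    | succ s ihs =>
      rw [Finset.sum_range_succ]
      have hcongr : ∀ i ∈ range (s+1),
          i.choose a * ((s+1-i).choose (b+1))
            = i.choose a * ((s-i).choose b) + i.choose a * ((s-i).choose (b+1)) := by
        intro i hi
        simp only [mem_range] at hi
        rw [show s+1-i = (s-i)+1 by omega, Nat.choose_succ_succ, mul_add]
      rw [Finset.sum_congr rfl hcongr, Finset.sum_add_distrib, ih s, ihs, Nat.sub_self,
        Nat.choose_eq_zero_of_lt (by omega : (0:ℕ) < b+1), mul_zero, add_zero,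
        show a+(b+1)+1 = (a+b+1)+1 by ring, Nat.choose_succ_succ (s+1)]

lemma key_sum (r M : ℕ) (h : r ≤ M) :
    ∑ k ∈ Icc 1 (M - r), (r+k-1).choose r * ((M-k).descFactorial r)
      = r.factorial * ((M+r).choose (2*r+1)) := by
  rcases Nat.eq_zero_or_pos M with rfl | hM
  · interval_cases r; simp
  have h1 : ∑ k ∈ Icc 1 (M - r), (r+k-1).choose r * ((M-k).descFactorial r)
      = r.factorial * ∑ k ∈ Icc 1 (M - r), (r+k-1).choose r * ((M-k).choose r) := by
    rw [Finset.mul_sum]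
    refine Finset.sum_congr rfl fun k _ => ?_
    rw [Nat.descFactorial_eq_factorial_mul_choose]; ring
  rw [h1]
  congr 1
  have h2 := conv_choose r r (M+r-1)
  rw [show M+r-1+1 = M+r by omega] at h2
  rw [show 2*r+1 = r+r+1 by ring, ← h2]
  have h3 : ∑ i ∈ range (M+r), (i.choose r) * ((M+r-1 - i).choose r)
      = ∑ i ∈ Ico r M, (i.choose r) * ((M+r-1 - i).choose r) := by
    refine (Finset.sum_subset ?_ ?_).symm
    · intro x hx; simp only [mem_Ico] at hx; simp only [mem_range]; omega
    · intro x hx hx'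
      simp only [mem_range] at hx
      simp only [mem_Ico, not_and, not_lt] at hx'
      rcases lt_or_ge x r with hxr | hxr
      · rw [Nat.choose_eq_zero_of_lt hxr, zero_mul]
      · rw [Nat.choose_eq_zero_of_lt (show M+r-1-x < r by omega), mul_zero]
  rw [h3, Finset.sum_Ico_eq_sum_range, ← Finset.Ico_add_one_right_eq_Icc, Finset.sum_Ico_eq_sum_range,
    show M - r + 1 - 1 = M - r by omega]
  refine Finset.sum_congr rfl fun i hi => ?_
  simp only [mem_range] at hi
  rw [show r+(1+i)-1 = r+i by omega, show M-(1+i) = M+r-1-(r+i) by omega]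

lemma prod_desc (M r k : ℕ) (hk : 1 ≤ k) (h : r + k ≤ M + 1) :
    ∏ j ∈ Icc k (r+k-1), ((M:ℤ) - j) = ((M - k).descFactorial r : ℤ) := by
  rw [show Icc k (r+k-1) = Ico k (r+k) by rw [← Finset.Ico_add_one_right_eq_Icc]; congr 1; omega,
    Finset.prod_Ico_eq_prod_range, show r+k-k = r by omega,
    Nat.descFactorial_eq_prod_range, Nat.cast_prod]
  refine Finset.prod_congr rfl fun i hi => ?_
  simp only [mem_range] at hi
  rw [show M - k - i = M - (k+i) by omega, Nat.cast_sub (by omega)]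


lemma final_id (b c : ℕ) :
    (b+c+4) * (b+1).factorial * ((2*b+c+5).choose (2*b+3))
      + (b+2).factorial * ((2*b+c+5).choose (2*b+5))
      = (b+2).factorial * ((2*b+c+7).choose (2*b+5)) := by
  have pas : (2*b+c+7).choose (2*b+5)
      = (2*b+c+5).choose (2*b+3) + 2 * ((2*b+c+5).choose (2*b+4)) + (2*b+c+5).choose (2*b+5) := by
    rw [show 2*b+c+7 = (2*b+c+6)+1 by ring, show 2*b+5 = (2*b+4)+1 by ring,
      Nat.choose_succ_succ, show 2*b+c+6 = (2*b+c+5)+1 by ring,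
      show 2*b+4 = (2*b+3)+1 by ring, Nat.choose_succ_succ,
      Nat.choose_succ_succ (2*b+c+5) ((2*b+3)+1)]
    ring
  have key : (2*b+c+5).choose (2*b+4) * (2*b+4) = (2*b+c+5).choose (2*b+3) * (c+2) := by
    have := Nat.choose_succ_right_eq (2*b+c+5) (2*b+3)
    rwa [show 2*b+3+1 = 2*b+4 by ring, show 2*b+c+5 - (2*b+3) = c+2 by omega] at this
  have hf : (b+2).factorial = (b+2) * (b+1).factorial := by
    rw [show b+2 = (b+1)+1 from rfl, Nat.factorial_succ]
  zify at key ⊢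
  rw [pas, hf]
  push_cast
  linear_combination -(((b+1).factorial : ℤ)) * key

theorem coeff_difference_vanishes (m n : ℕ) (hm : 3 ≤ m) (hn : 2 ≤ n) (hnm : n ≤ m - 2) :
    (∑ k ∈ Finset.Icc 1 (m - n + 1),
        ((m:ℤ) * ((n + k - 2).choose (k - 1) : ℤ) * ∏ j ∈ Finset.Icc k (n + k - 2), ((m:ℤ) - (j:ℤ))
          - ((n + k - 1).choose (k - 1) : ℤ) * ∏ j ∈ Finset.Icc k (n + k - 1), ((m:ℤ) + 1 - (j:ℤ))))
      + ∑ k ∈ Finset.Icc 1 (m - n - 1),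
          ((n + k - 1).choose (k - 1) : ℤ) * ∏ j ∈ Finset.Icc k (n + k - 1), ((m:ℤ) - 1 - (j:ℤ))
      = 0 := by
  obtain ⟨b, rfl⟩ : ∃ b, n = b + 2 := ⟨n - 2, by omega⟩
  obtain ⟨c, rfl⟩ : ∃ c, m = b + c + 4 := ⟨m - b - 4, by omega⟩
  clear hm hn hnm
  rw [show b+c+4 - (b+2) + 1 = c + 3 by omega, show b+c+4 - (b+2) - 1 = c+1 by omega,
    Finset.sum_sub_distrib]
  have eA : ∑ k ∈ Icc 1 (c+3), (((b+c+4:ℕ):ℤ) * (((b+2)+k-2).choose (k-1) : ℤ)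
        * ∏ j ∈ Icc k ((b+2)+k-2), (((b+c+4:ℕ):ℤ) - (j:ℤ)))
      = (((b+c+4) * ((b+1).factorial * ((2*b+c+5).choose (2*b+3))) : ℕ) : ℤ) := by
    have kA := key_sum (b+1) (b+c+4) (by omega)
    rw [show b+c+4-(b+1) = c+3 by omega] at kA
    calc ∑ k ∈ Icc 1 (c+3), (((b+c+4:ℕ):ℤ) * (((b+2)+k-2).choose (k-1) : ℤ)
            * ∏ j ∈ Icc k ((b+2)+k-2), (((b+c+4:ℕ):ℤ) - (j:ℤ)))
        = ((∑ k ∈ Icc 1 (c+3), (b+c+4) * (((b+1)+k-1).choose (b+1)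
            * ((b+c+4-k).descFactorial (b+1))) : ℕ) : ℤ) := by
          rw [Nat.cast_sum]
          refine Finset.sum_congr rfl fun k hk => ?_
          simp only [mem_Icc] at hk
          rw [show (b+2)+k-2 = (b+1)+k-1 by omega,
            prod_desc (b+c+4) (b+1) k hk.1 (by omega),
            show ((b+1)+k-1).choose (k-1) = ((b+1)+k-1).choose (b+1) by
              rw [← Nat.choose_symm (show k-1 ≤ (b+1)+k-1 by omega),
                show (b+1)+k-1-(k-1) = b+1 by omega]]
          push_cast; ring
      _ = _ := by
          rw [← Finset.mul_sum, kA, show b+c+4+(b+1) = 2*b+c+5 by ring,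
            show 2*(b+1)+1 = 2*b+3 by ring]
  have eB : ∑ k ∈ Icc 1 (c+3), ((((b+2)+k-1).choose (k-1) : ℤ)
        * ∏ j ∈ Icc k ((b+2)+k-1), (((b+c+4:ℕ):ℤ) + 1 - (j:ℤ)))
      = (((b+2).factorial * ((2*b+c+7).choose (2*b+5)) : ℕ) : ℤ) := by
    have kB := key_sum (b+2) (b+c+5) (by omega)
    rw [show b+c+5-(b+2) = c+3 by omega] at kB
    calc ∑ k ∈ Icc 1 (c+3), ((((b+2)+k-1).choose (k-1) : ℤ)
            * ∏ j ∈ Icc k ((b+2)+k-1), (((b+c+4:ℕ):ℤ) + 1 - (j:ℤ)))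
        = ((∑ k ∈ Icc 1 (c+3), ((b+2)+k-1).choose (b+2)
            * ((b+c+5-k).descFactorial (b+2)) : ℕ) : ℤ) := by
          rw [Nat.cast_sum]
          refine Finset.sum_congr rfl fun k hk => ?_
          simp only [mem_Icc] at hk
          rw [show (∏ j ∈ Icc k ((b+2)+k-1), (((b+c+4:ℕ):ℤ) + 1 - (j:ℤ)))
              = ∏ j ∈ Icc k ((b+2)+k-1), (((b+c+5:ℕ):ℤ) - (j:ℤ)) from
              Finset.prod_congr rfl fun j _ => by push_cast; ring,
            prod_desc (b+c+5) (b+2) k hk.1 (by omega),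
            show ((b+2)+k-1).choose (k-1) = ((b+2)+k-1).choose (b+2) by
              rw [← Nat.choose_symm (show k-1 ≤ (b+2)+k-1 by omega),
                show (b+2)+k-1-(k-1) = b+2 by omega]]
          push_cast; ring
      _ = _ := by
          rw [kB, show b+c+5+(b+2) = 2*b+c+7 by ring, show 2*(b+2)+1 = 2*b+5 by ring]
  have eC : ∑ k ∈ Icc 1 (c+1), ((((b+2)+k-1).choose (k-1) : ℤ)
        * ∏ j ∈ Icc k ((b+2)+k-1), (((b+c+4:ℕ):ℤ) - 1 - (j:ℤ)))
      = (((b+2).factorial * ((2*b+c+5).choose (2*b+5)) : ℕ) : ℤ) := by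
    have kC := key_sum (b+2) (b+c+3) (by omega)
    rw [show b+c+3-(b+2) = c+1 by omega] at kC
    calc ∑ k ∈ Icc 1 (c+1), ((((b+2)+k-1).choose (k-1) : ℤ)
            * ∏ j ∈ Icc k ((b+2)+k-1), (((b+c+4:ℕ):ℤ) - 1 - (j:ℤ)))
        = ((∑ k ∈ Icc 1 (c+1), ((b+2)+k-1).choose (b+2)
            * ((b+c+3-k).descFactorial (b+2)) : ℕ) : ℤ) := by
          rw [Nat.cast_sum]
          refine Finset.sum_congr rfl fun k hk => ?_
          simp only [mem_Icc] at hk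
          rw [show (∏ j ∈ Icc k ((b+2)+k-1), (((b+c+4:ℕ):ℤ) - 1 - (j:ℤ)))
              = ∏ j ∈ Icc k ((b+2)+k-1), (((b+c+3:ℕ):ℤ) - (j:ℤ)) from
              Finset.prod_congr rfl fun j _ => by push_cast; ring,
            prod_desc (b+c+3) (b+2) k hk.1 (by omega),
            show ((b+2)+k-1).choose (k-1) = ((b+2)+k-1).choose (b+2) by
              rw [← Nat.choose_symm (show k-1 ≤ (b+2)+k-1 by omega),
                show (b+2)+k-1-(k-1) = b+2 by omega]]
          push_cast; ring
      _ = _ := by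
          rw [kC, show b+c+3+(b+2) = 2*b+c+5 by ring, show 2*(b+2)+1 = 2*b+5 by ring]
  rw [eA, eB, eC]
  have h := final_id b c
  have h' : (((b+c+4) * (b+1).factorial * ((2*b+c+5).choose (2*b+3)) : ℕ) : ℤ)
      + (((b+2).factorial * ((2*b+c+5).choose (2*b+5)) : ℕ) : ℤ)
      = (((b+2).factorial * ((2*b+c+7).choose (2*b+5)) : ℕ) : ℤ) := by exact_mod_cast h
  push_cast at h' ⊢
  linarith [h']
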